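/- Let n ∈ ℕ, let B, C be n×n complex matrices, let λ₀ ∈ ℂ, and let x₀, x₁, …, x_k ∈ ℂⁿ with x₀ ≠ 0. Set x₋₁ = x₋₂ = 0. Then the vectors x₀, …, x_k form a Jordan chain for the pencil L(λ) = λ²·1 + λ·B + C corresponding to λ₀ (i.e. L(λ₀)·xᵢ + (2λ₀·1 + B)·x_{i−1} + x_{i−2} = 0 for i = 0, …, k) if and only if, for each i = 0, 1, …, k, the function t ↦ (∑_{j=0}^{i} (t^{i−j}/(i−j)!)·x_j) · e^{λ₀ t} from ℝ to ℂⁿ satisfies the homogeneous differential equation x''(t) + B·x'(t) + C·x(t) = 0 for all t ∈ ℝ. -/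

import Mathlib

open Finset

private noncomputable def Sf (n : ℕ) (x : ℕ → Fin n → ℂ) (i : ℤ) (t : ℝ) : Fin n → ℂ :=
  if 0 ≤ i then ∑ j ∈ Finset.range (i.toNat + 1),
    (((t : ℂ) ^ (i.toNat - j)) / (Nat.factorial (i.toNat - j) : ℂ)) • x j else 0

private lemma Sf_natCast (n : ℕ) (x : ℕ → Fin n → ℂ) (i : ℕ) (t : ℝ) :
    Sf n x (i : ℤ) t = ∑ j ∈ Finset.range (i + 1),
      (((t : ℂ) ^ (i - j)) / (Nat.factorial (i - j) : ℂ)) • x j := by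
  simp [Sf]

private lemma Sf_neg (n : ℕ) (x : ℕ → Fin n → ℂ) (i : ℤ) (hi : i < 0) (t : ℝ) :
    Sf n x i t = 0 := by simp [Sf, not_le.2 hi]

private lemma hasDerivAt_Sf (n : ℕ) (x : ℕ → Fin n → ℂ) (i : ℤ) (t : ℝ) :
    HasDerivAt (fun s => Sf n x i s) (Sf n x (i - 1) t) t := by
  rcases lt_or_ge i 0 with hi | hi
  · have h1 : (fun s => Sf n x i s) = fun _ => (0 : Fin n → ℂ) := by
      funext s; exact Sf_neg n x i hi s
    rw [h1, Sf_neg n x (i - 1) (by omega) t]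
    exact hasDerivAt_const t 0
  · lift i to ℕ using hi with m
    cases m with
    | zero =>
      have h1 : (fun s => Sf n x ((0 : ℕ) : ℤ) s) = fun _ => x 0 := by
        funext s; rw [Sf_natCast]; simp
      rw [h1, show ((0 : ℕ) : ℤ) - 1 = -1 by norm_num, Sf_neg n x (-1) (by omega) t]
      exact hasDerivAt_const t (x 0)
    | succ m =>
      have h1 : (fun s => Sf n x ((m + 1 : ℕ) : ℤ) s) = fun s : ℝ =>
          ∑ j ∈ Finset.range (m + 1 + 1),
            (((s : ℂ) ^ (m + 1 - j)) / (Nat.factorial (m + 1 - j) : ℂ)) • x j := by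
        funext s; rw [Sf_natCast]
      rw [h1, show ((m + 1 : ℕ) : ℤ) - 1 = ((m : ℕ) : ℤ) by push_cast; ring, Sf_natCast]
      have h2 : HasDerivAt (fun s : ℝ =>
          ∑ j ∈ Finset.range (m + 1 + 1),
            (((s : ℂ) ^ (m + 1 - j)) / (Nat.factorial (m + 1 - j) : ℂ)) • x j)
          (∑ j ∈ Finset.range (m + 1 + 1),
            ((((m + 1 - j : ℕ) : ℂ) * (t : ℂ) ^ (m + 1 - j - 1)) /
              (Nat.factorial (m + 1 - j) : ℂ)) • x j) t := by
        refine HasDerivAt.fun_sum fun j _ => ?_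
        exact (((hasDerivAt_pow (m + 1 - j) ((t : ℂ))).comp_ofReal).div_const _).smul_const _
      convert h2 using 1
      conv_rhs => rw [Finset.sum_range_succ]
      have hlast : (((m + 1 - (m + 1) : ℕ) : ℂ) * (t : ℂ) ^ (m + 1 - (m + 1) - 1) /
          (Nat.factorial (m + 1 - (m + 1)) : ℂ)) • x (m + 1) = 0 := by
        simp
      rw [hlast, add_zero]
      refine Finset.sum_congr rfl fun j hj => ?_
      simp only [Finset.mem_range] at hj
      have e1 : m + 1 - j = (m - j) + 1 := by omega
      rw [e1]
      congr 1
      have h3 : ((m - j + 1 : ℕ) : ℂ) ≠ 0 := Nat.cast_ne_zero.2 (Nat.succ_ne_zero _)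
      rw [Nat.factorial_succ, Nat.cast_mul, mul_div_mul_left _ _ h3, Nat.add_sub_cancel]

private lemma Sf_shift (n k : ℕ) (x : ℕ → Fin n → ℂ) (xx : ℤ → Fin n → ℂ)
    (hxx : ∀ i : ℤ, xx i = if 0 ≤ i ∧ i ≤ (k : ℤ) then x i.toNat else 0)
    (A : Matrix (Fin n) (Fin n) ℂ) (d i : ℕ) (hik : i ≤ k) (t : ℝ) :
    A.mulVec (Sf n x ((i : ℤ) - d) t) =
      ∑ m ∈ Finset.range (i + 1),
        (((t : ℂ) ^ (i - m)) / (Nat.factorial (i - m) : ℂ)) • A.mulVec (xx ((m : ℤ) - d)) := by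
  by_cases hd : d ≤ i
  · have h1 : ((i : ℤ) - d) = ((i - d : ℕ) : ℤ) := by omega
    rw [h1, Sf_natCast]
    have h2 : A.mulVec (∑ j ∈ Finset.range (i - d + 1),
        (((t : ℂ) ^ (i - d - j)) / (Nat.factorial (i - d - j) : ℂ)) • x j)
        = ∑ j ∈ Finset.range (i - d + 1),
        (((t : ℂ) ^ (i - d - j)) / (Nat.factorial (i - d - j) : ℂ)) • A.mulVec (x j) := by
      simp only [← Matrix.mulVecLin_apply, map_sum, map_smul]
    rw [h2]
    have h3 : ∑ m ∈ Finset.range (i + 1),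
        (((t : ℂ) ^ (i - m)) / (Nat.factorial (i - m) : ℂ)) • A.mulVec (xx ((m : ℤ) - d))
        = ∑ m ∈ Finset.Ico d (i + 1),
        (((t : ℂ) ^ (i - m)) / (Nat.factorial (i - m) : ℂ)) • A.mulVec (xx ((m : ℤ) - d)) := by
      refine (Finset.sum_subset ?_ ?_).symm
      · intro m hm
        simp only [Finset.mem_Ico, Finset.mem_range] at *
        omega
      · intro m hm hm2
        simp only [Finset.mem_Ico, Finset.mem_range] at hm hm2
        have hz : xx ((m : ℤ) - d) = 0 := by
          rw [hxx, if_neg]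
          push_neg
          intro hc
          omega
        rw [hz, Matrix.mulVec_zero, smul_zero]
    rw [h3, Finset.sum_Ico_eq_sum_range]
    have h4 : i + 1 - d = (i - d) + 1 := by omega
    rw [h4]
    refine Finset.sum_congr rfl fun j hj => ?_
    simp only [Finset.mem_range] at hj
    have h5 : xx (((d + j : ℕ) : ℤ) - d) = x j := by
      rw [show ((d + j : ℕ) : ℤ) - d = ((j : ℕ) : ℤ) by push_cast; ring, hxx, if_pos]
      · simp
      · refine ⟨by positivity, ?_⟩
        have : j ≤ k := by omega
        exact_mod_cast this
    rw [h5, show i - (d + j) = i - d - j by omega]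
  · have h0 : ((i : ℤ) - d) < 0 := by omega
    rw [Sf_neg n x _ h0, Matrix.mulVec_zero]
    refine (Finset.sum_eq_zero fun m hm => ?_).symm
    simp only [Finset.mem_range] at hm
    have hz : xx ((m : ℤ) - d) = 0 := by
      rw [hxx, if_neg]
      push_neg
      intro hc
      omega
    rw [hz, Matrix.mulVec_zero, smul_zero]

private lemma key_sum (n k : ℕ) (B C : Matrix (Fin n) (Fin n) ℂ) (lam : ℂ)
    (x : ℕ → Fin n → ℂ) (xx : ℤ → Fin n → ℂ)
    (hxx : ∀ i : ℤ, xx i = if 0 ≤ i ∧ i ≤ (k : ℤ) then x i.toNat else 0)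
    (i : ℕ) (hik : i ≤ k) (t : ℝ) :
    ((lam ^ 2) • (1 : Matrix (Fin n) (Fin n) ℂ) + lam • B + C).mulVec (Sf n x (i : ℤ) t)
      + ((2 * lam) • (1 : Matrix (Fin n) (Fin n) ℂ) + B).mulVec (Sf n x ((i : ℤ) - 1) t)
      + Sf n x ((i : ℤ) - 2) t
    = ∑ m ∈ Finset.range (i + 1),
        (((t : ℂ) ^ (i - m)) / (Nat.factorial (i - m) : ℂ)) •
          (((lam ^ 2) • (1 : Matrix (Fin n) (Fin n) ℂ) + lam • B + C).mulVec (xx (m : ℤ)) +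
            ((2 * lam) • (1 : Matrix (Fin n) (Fin n) ℂ) + B).mulVec (xx ((m : ℤ) - 1)) +
            xx ((m : ℤ) - 2)) := by
  have h0 := Sf_shift n k x xx hxx ((lam ^ 2) • (1 : Matrix (Fin n) (Fin n) ℂ) + lam • B + C) 0 i hik t
  have h1 := Sf_shift n k x xx hxx ((2 * lam) • (1 : Matrix (Fin n) (Fin n) ℂ) + B) 1 i hik t
  have h2 := Sf_shift n k x xx hxx (1 : Matrix (Fin n) (Fin n) ℂ) 2 i hik t
  simp only [Nat.cast_zero, sub_zero, Nat.cast_one, Nat.cast_ofNat, Matrix.one_mulVec] at h0 h1 h2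
  rw [h0, h1, h2, ← Finset.sum_add_distrib, ← Finset.sum_add_distrib]
  refine Finset.sum_congr rfl fun m _ => ?_
  rw [smul_add, smul_add]

private lemma key_ode (n k : ℕ) (B C : Matrix (Fin n) (Fin n) ℂ) (lam : ℂ)
    (x : ℕ → Fin n → ℂ) (xx : ℤ → Fin n → ℂ)
    (hxx : ∀ i : ℤ, xx i = if 0 ≤ i ∧ i ≤ (k : ℤ) then x i.toNat else 0)
    (i : ℕ) (hik : i ≤ k) (t : ℝ) :
    ((Complex.exp (lam * t) • Sf n x ((i : ℤ) - 1 - 1) t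
        + (lam * Complex.exp (lam * t)) • Sf n x ((i : ℤ) - 1) t)
      + ((lam * Complex.exp (lam * t)) • Sf n x ((i : ℤ) - 1) t
        + (lam * (lam * Complex.exp (lam * t))) • Sf n x (i : ℤ) t))
      + B.mulVec (Complex.exp (lam * t) • Sf n x ((i : ℤ) - 1) t
        + (lam * Complex.exp (lam * t)) • Sf n x (i : ℤ) t)
      + C.mulVec (Complex.exp (lam * t) • Sf n x (i : ℤ) t)
    = Complex.exp (lam * t) • ∑ m ∈ Finset.range (i + 1),
        (((t : ℂ) ^ (i - m)) / (Nat.factorial (i - m) : ℂ)) •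
          (((lam ^ 2) • (1 : Matrix (Fin n) (Fin n) ℂ) + lam • B + C).mulVec (xx (m : ℤ)) +
            ((2 * lam) • (1 : Matrix (Fin n) (Fin n) ℂ) + B).mulVec (xx ((m : ℤ) - 1)) +
            xx ((m : ℤ) - 2)) := by
  rw [← key_sum n k B C lam x xx hxx i hik t,
    show (i : ℤ) - 1 - 1 = (i : ℤ) - 2 by ring]
  simp only [Matrix.add_mulVec, Matrix.smul_mulVec, Matrix.one_mulVec,
    Matrix.mulVec_add, Matrix.mulVec_smul]
  module

/-- `x₀, …, x_k` (with `x₋₁ = x₋₂ = 0`) is a Jordan chain of the pencil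
`L(λ) = λ²·1 + λ·B + C` at `λ₀` iff for each `i ≤ k` the function
`t ↦ (∑_{j=0}^{i} t^{i−j}/(i−j)! · x_j) e^{λ₀ t}` solves the homogeneous equation
`x'' + Bx' + Cx = 0`. -/
theorem jordan_chain_iff_solutions (n k : ℕ) (B C : Matrix (Fin n) (Fin n) ℂ)
    (lam : ℂ) (x : ℕ → (Fin n → ℂ)) (hx0 : x 0 ≠ 0)
    (xx : ℤ → (Fin n → ℂ))
    (hxx : ∀ i : ℤ, xx i = if 0 ≤ i ∧ i ≤ (k : ℤ) then x i.toNat else 0)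
    (g : ℕ → ℝ → (Fin n → ℂ))
    (hg : ∀ (i : ℕ) (t : ℝ), g i t =
      Complex.exp (lam * t) •
        ∑ j ∈ Finset.range (i + 1),
          (((t : ℂ) ^ (i - j)) / (Nat.factorial (i - j) : ℂ)) • x j) :
    (∀ i : ℤ, 0 ≤ i → i ≤ (k : ℤ) →
        ((lam ^ 2) • (1 : Matrix (Fin n) (Fin n) ℂ) + lam • B + C).mulVec (xx i) +
          ((2 * lam) • (1 : Matrix (Fin n) (Fin n) ℂ) + B).mulVec (xx (i - 1)) +
          xx (i - 2) = 0) ↔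
      (∀ i : ℕ, i ≤ k →
        ∃ g' g'' : ℝ → (Fin n → ℂ),
          (∀ t : ℝ, HasDerivAt (g i) (g' t) t) ∧
          (∀ t : ℝ, HasDerivAt g' (g'' t) t) ∧
          (∀ t : ℝ, g'' t + B.mulVec (g' t) + C.mulVec (g i t) = 0)) := by
  have hexp : ∀ t : ℝ, HasDerivAt (fun s : ℝ => Complex.exp (lam * s))
      (lam * Complex.exp (lam * t)) t := by
    intro t
    have := (((hasDerivAt_id ((t : ℝ) : ℂ)).const_mul lam).cexp).comp_ofReal
    simpa [mul_comm] using this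
  have hgfun : ∀ i : ℕ, g i = fun t : ℝ => Complex.exp (lam * t) • Sf n x (i : ℤ) t := by
    intro i; funext t; rw [hg, Sf_natCast]
  have hd1 : ∀ (i : ℕ) (t : ℝ), HasDerivAt (g i)
      (Complex.exp (lam * t) • Sf n x ((i : ℤ) - 1) t
        + (lam * Complex.exp (lam * t)) • Sf n x (i : ℤ) t) t := by
    intro i t
    rw [hgfun i]
    exact (hexp t).smul (hasDerivAt_Sf n x (i : ℤ) t)
  have hd2 : ∀ (i : ℕ) (t : ℝ), HasDerivAt
      (fun t : ℝ => Complex.exp (lam * t) • Sf n x ((i : ℤ) - 1) t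
        + (lam * Complex.exp (lam * t)) • Sf n x (i : ℤ) t)
      ((Complex.exp (lam * t) • Sf n x ((i : ℤ) - 1 - 1) t
          + (lam * Complex.exp (lam * t)) • Sf n x ((i : ℤ) - 1) t)
        + ((lam * Complex.exp (lam * t)) • Sf n x ((i : ℤ) - 1) t
          + (lam * (lam * Complex.exp (lam * t))) • Sf n x (i : ℤ) t)) t := by
    intro i t
    exact ((hexp t).smul (hasDerivAt_Sf n x ((i : ℤ) - 1) t)).add
      (((hexp t).const_mul lam).smul (hasDerivAt_Sf n x (i : ℤ) t))
  constructor
  · intro h i hik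
    refine ⟨_, _, hd1 i, hd2 i, ?_⟩
    intro t
    rw [hgfun i]
    rw [key_ode n k B C lam x xx hxx i hik t]
    have hz : ∑ m ∈ Finset.range (i + 1),
        (((t : ℂ) ^ (i - m)) / (Nat.factorial (i - m) : ℂ)) •
          (((lam ^ 2) • (1 : Matrix (Fin n) (Fin n) ℂ) + lam • B + C).mulVec (xx (m : ℤ)) +
            ((2 * lam) • (1 : Matrix (Fin n) (Fin n) ℂ) + B).mulVec (xx ((m : ℤ) - 1)) +
            xx ((m : ℤ) - 2)) = 0 := by
      refine Finset.sum_eq_zero fun m hm => ?_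
      simp only [Finset.mem_range] at hm
      have hmk : (m : ℤ) ≤ (k : ℤ) := by exact_mod_cast (by omega : m ≤ k)
      rw [h (m : ℤ) (by positivity) hmk, smul_zero]
    rw [hz, smul_zero]
  · intro h i hi0 hik
    lift i to ℕ using hi0 with j
    have hjk : j ≤ k := by exact_mod_cast hik
    obtain ⟨g', g'', hD1, hD2, hode⟩ := h j hjk
    have hg' : g' = fun t : ℝ => Complex.exp (lam * t) • Sf n x ((j : ℤ) - 1) t
        + (lam * Complex.exp (lam * t)) • Sf n x (j : ℤ) t := by
      funext t; exact (hD1 t).unique (hd1 j t)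
    rw [hg'] at hD2 hode
    have hg'' : ∀ t, g'' t = (Complex.exp (lam * t) • Sf n x ((j : ℤ) - 1 - 1) t
          + (lam * Complex.exp (lam * t)) • Sf n x ((j : ℤ) - 1) t)
        + ((lam * Complex.exp (lam * t)) • Sf n x ((j : ℤ) - 1) t
          + (lam * (lam * Complex.exp (lam * t))) • Sf n x (j : ℤ) t) := by
      intro t; exact (hD2 t).unique (hd2 j t)
    have h0 := hode 0
    rw [hg'' 0, hgfun j] at h0
    rw [key_ode n k B C lam x xx hxx j hjk 0] at h0
    have hsum : ∑ m ∈ Finset.range (j + 1),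
        ((((0 : ℝ) : ℂ)) ^ (j - m) / (Nat.factorial (j - m) : ℂ)) •
          (((lam ^ 2) • (1 : Matrix (Fin n) (Fin n) ℂ) + lam • B + C).mulVec (xx (m : ℤ)) +
            ((2 * lam) • (1 : Matrix (Fin n) (Fin n) ℂ) + B).mulVec (xx ((m : ℤ) - 1)) +
            xx ((m : ℤ) - 2))
        = ((lam ^ 2) • (1 : Matrix (Fin n) (Fin n) ℂ) + lam • B + C).mulVec (xx (j : ℤ)) +
            ((2 * lam) • (1 : Matrix (Fin n) (Fin n) ℂ) + B).mulVec (xx ((j : ℤ) - 1)) +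
            xx ((j : ℤ) - 2) := by
      rw [Finset.sum_eq_single_of_mem j (Finset.self_mem_range_succ j)]
      · simp
      · intro m hm hne
        simp only [Finset.mem_range] at hm
        have hjm : j - m ≠ 0 := by omega
        rw [Complex.ofReal_zero, zero_pow hjm, zero_div, zero_smul]
    rw [hsum] at h0
    have he : Complex.exp (lam * ((0 : ℝ) : ℂ)) = 1 := by
      simp
    rw [Complex.ofReal_zero] at h0
    simpa using h0
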